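/- Fix a positive integer q and let χ₁(κ; q, q) = κ + sin(4πqκ)/(4πq) − sin(2πqκ)/(πq) for 0 < κ < 1/2. Then χ₁(κ; q, q) < 0 for κ ∈ (0, ζ₀/(2πq)) and χ₁(κ; q, q) > 0 for κ ∈ (ζ₀/(2πq), 1/2), where ζ₀ is the unique root of (sin ζ/ζ)(2 − cos ζ) = 1 in (0, π). -/

import Mathlib

open Real Set

noncomputable def gAux (ζ : ℝ) : ℝ := 2 * Real.sin ζ - Real.sin (2*ζ)/2 - ζ

lemma gAux_cont : Continuous gAux := by unfold gAux; fun_prop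

lemma gAux_eq (ζ : ℝ) : gAux ζ = Real.sin ζ * (2 - Real.cos ζ) - ζ := by
  unfold gAux; rw [Real.sin_two_mul]; ring

lemma gAux_root_iff {ζ : ℝ} (hζ : ζ ≠ 0) :
    gAux ζ = 0 ↔ (Real.sin ζ / ζ) * (2 - Real.cos ζ) = 1 := by
  rw [gAux_eq, div_mul_eq_mul_div, div_eq_one_iff_eq hζ]
  constructor <;> intro h <;> linarith

lemma gAux_deriv (x : ℝ) :
    HasDerivAt gAux (2*Real.cos x - Real.cos (2*x) - 1) x := by
  have h1 : HasDerivAt (fun y => 2 * Real.sin y) (2 * Real.cos x) x :=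
    (Real.hasDerivAt_sin x).const_mul 2
  have h2 : HasDerivAt (fun y : ℝ => Real.sin (2*y)) (Real.cos (2*x) * 2) x := by
    have := (Real.hasDerivAt_sin (2*x)).comp x ((hasDerivAt_id x).const_mul 2)
    simpa [Function.comp_def, mul_comm] using this
  have h3 : HasDerivAt (fun y : ℝ => Real.sin (2*y)/2) (Real.cos (2*x)) x := by
    simpa using h2.div_const 2
  have h := (h1.sub h3).sub (hasDerivAt_id x)
  exact h

lemma gAux_pos {x : ℝ} (hx : 0 < x) (hx2 : x ≤ π/2) : 0 < gAux x := by
  have hπ := Real.pi_pos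
  have mono : StrictMonoOn gAux (Icc 0 (π/2)) := by
    apply strictMonoOn_of_deriv_pos (convex_Icc _ _) gAux_cont.continuousOn
    intro y hy
    rw [interior_Icc] at hy
    rw [(gAux_deriv y).deriv]
    have hc1 : 0 < Real.cos y :=
      Real.cos_pos_of_mem_Ioo ⟨by linarith [hy.1], hy.2⟩
    have hc2 : Real.cos y < 1 := by
      have := Real.cos_lt_cos_of_nonneg_of_le_pi (le_refl 0) (by linarith [hy.2]) hy.1
      simpa using this
    rw [Real.cos_two_mul]; nlinarith
  have h0 : gAux 0 = 0 := by simp [gAux]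
  have := mono ⟨le_refl 0, by positivity⟩ ⟨hx.le, hx2⟩ hx
  linarith

theorem chi1_qq_sign
    (q : ℕ) (hq : 1 ≤ q)
    (ζ₀ : ℝ) (hζ₀ : ζ₀ ∈ Set.Ioo (0:ℝ) π)
    (hroot : (Real.sin ζ₀ / ζ₀) * (2 - Real.cos ζ₀) = 1)
    (huniq : ∀ ζ ∈ Set.Ioo (0:ℝ) π,
      (Real.sin ζ / ζ) * (2 - Real.cos ζ) = 1 → ζ = ζ₀)
    (χ₁ : ℝ → ℝ)
    (hχ₁ : ∀ κ, χ₁ κ = κ + Real.sin (4*π*q*κ) / (4*π*q) - Real.sin (2*π*q*κ) / (π*q)) :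
    (∀ κ ∈ Set.Ioo (0:ℝ) (ζ₀ / (2*π*q)), κ < 1/2 → χ₁ κ < 0)
    ∧ (∀ κ ∈ Set.Ioo (ζ₀ / (2*π*q)) (1/2 : ℝ), 0 < χ₁ κ) := by
  have hπ := Real.pi_pos
  have hq' : (0:ℝ) < q := by exact_mod_cast Nat.lt_of_lt_of_le Nat.zero_lt_one hq
  have hden : (0:ℝ) < 2*π*q := by positivity
  obtain ⟨hζ₀0, hζ₀π⟩ := hζ₀
  have key : ∀ κ : ℝ, χ₁ κ = -(gAux (2*π*q*κ)) / (2*π*q) := by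
    intro κ
    rw [hχ₁]
    unfold gAux
    have h4 : (4:ℝ)*π*q*κ = 2*(2*π*q*κ) := by ring
    rw [h4]
    field_simp
    ring
  constructor
  · rintro κ ⟨hκ0, hκ1⟩ _
    set ζ := 2*π*q*κ with hζdef
    have hζ0 : 0 < ζ := by positivity
    have hζlt : ζ < ζ₀ := by
      have := (lt_div_iff₀ hden).mp hκ1
      nlinarith
    have hgpos : 0 < gAux ζ := by
      rcases le_or_gt ζ (π/2) with hle | hgt
      · exact gAux_pos hζ0 hle
      · by_contra hcon
        push_neg at hcon
        have hhalfpos : 0 < gAux (π/2) := gAux_pos (by positivity) le_rfl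
        have hmem : (0:ℝ) ∈ Icc (gAux ζ) (gAux (π/2)) := ⟨hcon, hhalfpos.le⟩
        obtain ⟨x, hxmem, hx0⟩ :=
          intermediate_value_Icc' hgt.le gAux_cont.continuousOn hmem
        have hx0' : (Real.sin x / x) * (2 - Real.cos x) = 1 :=
          (gAux_root_iff (by nlinarith [hxmem.1] : x ≠ 0)).mp hx0
        have hxIoo : x ∈ Ioo (0:ℝ) π := ⟨by nlinarith [hxmem.1], by nlinarith [hxmem.2]⟩
        have := huniq x hxIoo hx0'
        nlinarith [hxmem.2]
    rw [key]
    apply div_neg_of_neg_of_pos (by linarith) hden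
  · rintro κ ⟨hκ1, hκ2⟩
    set ζ := 2*π*q*κ with hζdef
    have hζgt : ζ₀ < ζ := by
      have := (div_lt_iff₀ hden).mp hκ1
      nlinarith
    have hζ0 : 0 < ζ := lt_trans hζ₀0 hζgt
    have hgneg : gAux ζ < 0 := by
      rcases le_or_gt π ζ with hge | hlt
      · rw [gAux_eq]
        have hs := Real.sin_le_one ζ
        have hs' := Real.neg_one_le_sin ζ
        have hc := Real.cos_le_one ζ
        have hc' := Real.neg_one_le_cos ζ
        have hπ3 := Real.pi_gt_three
        nlinarith
      · by_contra hcon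
        push_neg at hcon
        have hgπ : gAux π = -π := by
          rw [gAux_eq, Real.sin_pi]; ring
        have hmem : (0:ℝ) ∈ Icc (gAux π) (gAux ζ) := ⟨by rw [hgπ]; linarith, hcon⟩
        obtain ⟨x, hxmem, hx0⟩ :=
          intermediate_value_Icc' hlt.le gAux_cont.continuousOn hmem
        have hxπ : x < π := by
          rcases lt_or_eq_of_le hxmem.2 with h | h
          · exact h
          · exfalso; rw [h, hgπ] at hx0; linarith
        have hx0' : (Real.sin x / x) * (2 - Real.cos x) = 1 :=
          (gAux_root_iff (by nlinarith [hxmem.1] : x ≠ 0)).mp hx0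
        have := huniq x ⟨by nlinarith [hxmem.1], hxπ⟩ hx0'
        nlinarith [hxmem.1]
    rw [key]
    apply div_pos (by linarith) hden
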